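/- Let k be an arbitrary field and let A be a finite-dimensional commutative Frobenius algebra over k, with comultiplication Δ, counit ε and multiplication m. If the window endomorphism m ∘ Δ : A → A is bijective, then A is separable in the following sense: for every field extension K of k, the K-algebra K ⊗[k] A is a semisimple ring; in particular A itself is a semisimple ring. -/

import Mathlib

open TensorProduct

/-- Semisimplicity from a separability idempotent, over a field. -/
theorem semisimple_of_sep_idem {K : Type*} [Field K] {R : Type*} [CommRing R] [Algebra K R]
    (e : R ⊗[K] R) (h1 : LinearMap.mul' K R e = 1)
    (h2 : ∀ r : R, (r ⊗ₜ[K] (1 : R)) * e = ((1 : R) ⊗ₜ[K] r) * e) :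
    IsSemisimpleRing R := by
  refine (isSemisimpleModule_iff R R).mpr ⟨?_⟩
  intro N
  -- K-linear projection onto N
  obtain ⟨W, hW⟩ := Submodule.exists_isCompl (N.restrictScalars K)
  set p : R →ₗ[K] R := (N.restrictScalars K).subtype ∘ₗ
    (N.restrictScalars K).linearProjOfIsCompl W hW with hp
  have hpmem : ∀ r, p r ∈ N := fun r => ((N.restrictScalars K).linearProjOfIsCompl W hW r).2
  have hpid : ∀ r ∈ N, p r = r := fun r hr => by
    simp [hp, Submodule.linearProjOfIsCompl_apply_left hW ⟨r, hr⟩]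
    exact congrArg Subtype.val (Submodule.linearProjOfIsCompl_apply_left hW ⟨r, hr⟩)
  -- the bilinear operator
  set Q : R ⊗[K] R →ₗ[K] (R →ₗ[K] R) := TensorProduct.lift
    { toFun := fun x =>
        { toFun := fun y => (LinearMap.mulLeft K x) ∘ₗ p ∘ₗ (LinearMap.mulLeft K y)
          map_add' := fun y y' => by ext r; simp [add_mul, mul_add]
          map_smul' := fun c y => by ext r; simp [smul_mul_assoc] }
      map_add' := fun x x' => by ext y r; simp [add_mul]
      map_smul' := fun c x => by ext y r; simp [smul_mul_assoc] } with hQ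
  have hQt : ∀ (x y r : R), Q (x ⊗ₜ[K] y) r = x * p (y * r) := fun x y r => by simp [hQ]
  set q : R →ₗ[K] R := Q e with hq
  -- q fixes N
  have hfix : ∀ n ∈ N, q n = n := by
    intro n hn
    have key : ∀ E : R ⊗[K] R, Q E n = LinearMap.mul' K R E * n := by
      intro E
      induction E using TensorProduct.induction_on with
      | zero => simp
      | tmul x y =>
          rw [hQt]
          have : p (y * n) = y * n := hpid _ (N.smul_mem y hn)
          rw [this, LinearMap.mul'_apply]; ring
      | add a b ha hb => simp [map_add, ha, hb, add_mul]
    rw [hq, key, h1, one_mul]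
  -- range of q lies in N
  have hrange : ∀ r, q r ∈ N := by
    intro r
    have key : ∀ E : R ⊗[K] R, Q E r ∈ N := by
      intro E
      induction E using TensorProduct.induction_on with
      | zero => simp
      | tmul x y => rw [hQt]; exact N.smul_mem x (hpmem _)
      | add a b ha hb => rw [map_add, LinearMap.add_apply]; exact N.add_mem ha hb
    exact key e
  -- R-linearity of q
  have hleft : ∀ (b : R) (E : R ⊗[K] R) (r : R),
      Q ((b ⊗ₜ[K] (1 : R)) * E) r = b * Q E r := by
    intro b E r
    induction E using TensorProduct.induction_on with
    | zero => simp
    | tmul x y => rw [Algebra.TensorProduct.tmul_mul_tmul, hQt, hQt, one_mul, mul_assoc]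
    | add a c ha hc => rw [mul_add, map_add, LinearMap.add_apply, ha, hc,
        map_add, LinearMap.add_apply, mul_add]
  have hright : ∀ (b : R) (E : R ⊗[K] R) (r : R),
      Q (((1 : R) ⊗ₜ[K] b) * E) r = Q E (b * r) := by
    intro b E r
    induction E using TensorProduct.induction_on with
    | zero => simp
    | tmul x y => rw [Algebra.TensorProduct.tmul_mul_tmul, hQt, hQt, one_mul, mul_assoc, mul_left_comm]
    | add a c ha hc => rw [mul_add, map_add, LinearMap.add_apply, ha, hc,
        map_add, LinearMap.add_apply]
  have hRlin : ∀ (b r : R), q (b * r) = b * q r := by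
    intro b r
    rw [hq, ← hright b e r, ← h2, hleft]
  -- package as R-linear map and take kernel as complement
  set qR : R →ₗ[R] R :=
    { toFun := q
      map_add' := q.map_add
      map_smul' := fun b r => by simpa [smul_eq_mul] using hRlin b r } with hqR
  refine ⟨LinearMap.ker qR, ?_, ?_⟩
  · -- disjoint
    rw [disjoint_iff_inf_le]
    rintro x ⟨hxN, hxK⟩
    have : q x = 0 := hxK
    have := hfix x hxN
    simp_all
  · -- codisjoint
    rw [codisjoint_iff_le_sup]
    intro r _
    have h1' : q r ∈ N := hrange r
    have h2' : r - q r ∈ LinearMap.ker qR := by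
      have : q (q r) = q r := hfix _ (hrange r)
      simp only [LinearMap.mem_ker, hqR]
      show q (r - q r) = 0
      rw [map_sub, this, sub_self]
    have : r = q r + (r - q r) := by ring
    rw [this]
    exact Submodule.add_mem_sup h1' h2'

set_option maxHeartbeats 1000000 in
set_option synthInstance.maxHeartbeats 100000 in
theorem separable_of_window_bijective
    {k : Type*} [Field k]
    {A : Type*} [CommRing A] [Algebra k A] [FiniteDimensional k A]
    (Δ : A →ₗ[k] A ⊗[k] A) (ε : A →ₗ[k] k)
    (hcoassoc : (TensorProduct.assoc k A A A).toLinearMap.comp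
        ((LinearMap.rTensor A Δ).comp Δ) = (LinearMap.lTensor A Δ).comp Δ)
    (hcounit_left : (TensorProduct.lid k A).toLinearMap.comp
        ((LinearMap.rTensor A ε).comp Δ) = LinearMap.id)
    (hcounit_right : (TensorProduct.rid k A).toLinearMap.comp
        ((LinearMap.lTensor A ε).comp Δ) = LinearMap.id)
    (hcocomm : (TensorProduct.comm k A A).toLinearMap.comp Δ = Δ)
    (hfrob : (LinearMap.lTensor A (LinearMap.mul' k A)).comp
        ((TensorProduct.assoc k A A A).toLinearMap.comp (LinearMap.rTensor A Δ))
      = (LinearMap.rTensor A (LinearMap.mul' k A)).comp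
        ((TensorProduct.assoc k A A A).symm.toLinearMap.comp (LinearMap.lTensor A Δ)))
    (hwindow : Function.Bijective ((LinearMap.mul' k A).comp Δ)) :
    (∀ (K : Type*) [Field K] [Algebra k K], IsSemisimpleRing (K ⊗[k] A)) ∧
      IsSemisimpleRing A := by
  classical
  -- Step 1: Δ a = (a ⊗ 1) * Δ 1
  have hL : ∀ E : A ⊗[k] A, (LinearMap.lTensor A (LinearMap.mul' k A))
      ((TensorProduct.assoc k A A A) (E ⊗ₜ[k] (1 : A))) = E := by
    intro E
    induction E using TensorProduct.induction_on with
    | zero => rw [zero_tmul, LinearEquiv.map_zero, LinearMap.map_zero]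
    | tmul x y => rw [TensorProduct.assoc_tmul, LinearMap.lTensor_tmul,
        LinearMap.mul'_apply, mul_one]
    | add a b ha hb => rw [add_tmul, map_add, map_add, ha, hb]
  have hR : ∀ (a : A) (E : A ⊗[k] A), (LinearMap.rTensor A (LinearMap.mul' k A))
      ((TensorProduct.assoc k A A A).symm (a ⊗ₜ[k] E)) = (a ⊗ₜ[k] (1 : A)) * E := by
    intro a E
    induction E using TensorProduct.induction_on with
    | zero => rw [tmul_zero, LinearEquiv.map_zero, LinearMap.map_zero, mul_zero]
    | tmul x y => rw [TensorProduct.assoc_symm_tmul, LinearMap.rTensor_tmul,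
        LinearMap.mul'_apply, Algebra.TensorProduct.tmul_mul_tmul, one_mul]
    | add b c hb hc => rw [tmul_add, map_add, map_add, hb, hc, mul_add]
  have hΔl : ∀ a : A, Δ a = (a ⊗ₜ[k] (1 : A)) * Δ 1 := by
    intro a
    have h := DFunLike.congr_fun hfrob (a ⊗ₜ[k] (1 : A))
    simp only [LinearMap.comp_apply, LinearEquiv.coe_coe, LinearMap.rTensor_tmul,
      LinearMap.lTensor_tmul] at h
    rw [hL (Δ a), hR a (Δ 1)] at h
    exact h
  -- Step 2: Δ a = (1 ⊗ a) * Δ 1 using cocommutativity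
  have hcomm_mul : ∀ (a : A) (E : A ⊗[k] A), (TensorProduct.comm k A A)
      ((a ⊗ₜ[k] (1 : A)) * E) = ((1 : A) ⊗ₜ[k] a) * (TensorProduct.comm k A A) E := by
    intro a E
    induction E using TensorProduct.induction_on with
    | zero => simp
    | tmul x y => simp [Algebra.TensorProduct.tmul_mul_tmul]
    | add b c hb hc => rw [mul_add, map_add, hb, hc, map_add, mul_add]
  have hΔ1 : (TensorProduct.comm k A A) (Δ 1) = Δ 1 := DFunLike.congr_fun hcocomm 1
  have hΔr : ∀ a : A, Δ a = ((1 : A) ⊗ₜ[k] a) * Δ 1 := by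
    intro a
    conv_lhs => rw [← DFunLike.congr_fun hcocomm a]
    show (TensorProduct.comm k A A) (Δ a) = _
    rw [hΔl a, hcomm_mul, hΔ1]
  -- Step 3: the window is multiplication by u := mul' (Δ 1), hence u is invertible
  have hmul : ∀ (a : A) (E : A ⊗[k] A),
      LinearMap.mul' k A ((a ⊗ₜ[k] (1 : A)) * E) = a * LinearMap.mul' k A E := by
    intro a E
    induction E using TensorProduct.induction_on with
    | zero => simp
    | tmul x y => simp [Algebra.TensorProduct.tmul_mul_tmul, mul_assoc]
    | add b c hb hc => rw [mul_add, map_add, hb, hc, map_add, mul_add]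
  obtain ⟨v, hv⟩ := hwindow.2 1
  have hv' : v * LinearMap.mul' k A (Δ 1) = 1 := by
    have : LinearMap.mul' k A (Δ v) = 1 := hv
    rwa [hΔl v, hmul] at this
  -- Step 4: separability idempotent for A
  set eA : A ⊗[k] A := (v ⊗ₜ[k] (1 : A)) * Δ 1 with heA
  have h1A : LinearMap.mul' k A eA = 1 := by rw [heA, hmul]; exact hv'
  have h2A : ∀ a : A, (a ⊗ₜ[k] (1 : A)) * eA = ((1 : A) ⊗ₜ[k] a) * eA := by
    intro a
    rw [heA, mul_left_comm, ← hΔl a, hΔr a, mul_left_comm]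
  refine ⟨?_, semisimple_of_sep_idem eA h1A h2A⟩
  intro K _ _
  set B := K ⊗[k] A with hB
  -- base change the separability idempotent
  set f : A →ₐ[k] B ⊗[K] B :=
    ((Algebra.TensorProduct.includeLeft : B →ₐ[K] B ⊗[K] B).restrictScalars k).comp
      (Algebra.TensorProduct.includeRight : A →ₐ[k] B) with hf
  set g : A →ₐ[k] B ⊗[K] B :=
    ((Algebra.TensorProduct.includeRight : B →ₐ[K] B ⊗[K] B).restrictScalars k).comp
      (Algebra.TensorProduct.includeRight : A →ₐ[k] B) with hg
  set ψ : A ⊗[k] A →ₐ[k] B ⊗[K] B := Algebra.TensorProduct.productMap f g with hψ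
  have hψt : ∀ x y : A, ψ (x ⊗ₜ[k] y)
      = (((1 : K) ⊗ₜ[k] x : B) ⊗ₜ[K] ((1 : K) ⊗ₜ[k] y : B)) := by
    intro x y
    rw [hψ, Algebra.TensorProduct.productMap_apply_tmul]
    simp [hf, hg, Algebra.TensorProduct.tmul_mul_tmul]
    rfl
  set eB : B ⊗[K] B := ψ eA with heB
  have h1B : LinearMap.mul' K B eB = 1 := by
    have key : ∀ E : A ⊗[k] A, LinearMap.mul' K B (ψ E)
        = ((1 : K) ⊗ₜ[k] (LinearMap.mul' k A E) : B) := by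
      intro E
      induction E using TensorProduct.induction_on with
      | zero => simp
      | tmul x y => rw [hψt, LinearMap.mul'_apply, Algebra.TensorProduct.tmul_mul_tmul,
          one_mul, LinearMap.mul'_apply]
      | add a b ha hb => rw [map_add, map_add, ha, hb, map_add, tmul_add]
    rw [heB, key, h1A]
    rfl
  have h2B : ∀ b : B, (b ⊗ₜ[K] (1 : B)) * eB = ((1 : B) ⊗ₜ[K] b) * eB := by
    intro b
    induction b using TensorProduct.induction_on with
    | zero => simp
    | tmul c a =>
        have hsm : (c ⊗ₜ[k] a : B) = c • (((1 : K) ⊗ₜ[k] a) : B) := by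
          rw [smul_tmul', smul_eq_mul, mul_one]
        have base : ((((1 : K) ⊗ₜ[k] a) : B) ⊗ₜ[K] (1 : B)) * eB
            = ((1 : B) ⊗ₜ[K] (((1 : K) ⊗ₜ[k] a) : B)) * eB := by
          have l1 : ((((1 : K) ⊗ₜ[k] a) : B) ⊗ₜ[K] (1 : B)) = ψ (a ⊗ₜ[k] (1 : A)) := by
            rw [hψt]; rfl
          have l2 : ((1 : B) ⊗ₜ[K] (((1 : K) ⊗ₜ[k] a) : B)) = ψ ((1 : A) ⊗ₜ[k] a) := by
            rw [hψt]; rfl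
          rw [l1, l2, heB, ← map_mul, ← map_mul, h2A]
        have e1 : ((c ⊗ₜ[k] a : B) ⊗ₜ[K] (1 : B))
            = c • ((((1 : K) ⊗ₜ[k] a : B)) ⊗ₜ[K] (1 : B)) := by
          rw [smul_tmul', ← hsm]
        have e2 : ((1 : B) ⊗ₜ[K] (c ⊗ₜ[k] a : B))
            = c • ((1 : B) ⊗ₜ[K] (((1 : K) ⊗ₜ[k] a : B))) := by
          rw [← tmul_smul, ← hsm]
        rw [e1, e2, smul_mul_assoc, smul_mul_assoc, base]
    | add b b' hb hb' => rw [add_tmul, tmul_add, add_mul, add_mul, hb, hb']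
  exact semisimple_of_sep_idem eB h1B h2B
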